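/- Let F be an m×n complex matrix, let R be an n×n Hermitian positive semidefinite matrix of rank m such that the m×m matrix F·R·F* is positive definite (invertible), and let β₀ > 0 be a real number. Let (F·R·F*)^{-1/2} denote the unique Hermitian positive definite matrix whose square is (F·R·F*)⁻¹, and set Φ̂ = β₀·(F·R·F*)^{-1/2}·F·R. Then Φ̂*·Φ̂ = β₀²·R, and for every m×n complex matrix Φ satisfying the constraint Φ*·Φ = β₀²·R, the Frobenius-norm error satisfies ‖Φ̂ − F‖_F ≤ ‖Φ − F‖_F. That is, Φ̂ is the scaled-constrained least-squares matrix with prescribed Gram matrix β₀²R closest to F. -/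

import Mathlib

open Matrix
open scoped ComplexOrder

lemma normSum {p q : ℕ} (A : Matrix (Fin p) (Fin q) ℂ) :
    (Matrix.trace (Aᴴ * A)).re = ∑ i, ∑ j, ‖A i j‖ ^ 2 := by
  rw [Finset.sum_comm]
  simp only [Matrix.trace, Matrix.diag, Matrix.mul_apply, Matrix.conjTranspose_apply,
    Complex.re_sum]
  refine Finset.sum_congr rfl fun j _ => Finset.sum_congr rfl fun i _ => ?_
  have : (starRingEnd ℂ) (A i j) * A i j = ((‖A i j‖ ^ 2 : ℝ) : ℂ) := by
    rw [mul_comm, Complex.mul_conj]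
    norm_cast
    rw [Complex.normSq_eq_norm_sq]
  rw [show star (A i j) = (starRingEnd ℂ) (A i j) from rfl, this, Complex.ofReal_re]

lemma trace_cs {p q : ℕ} (A : Matrix (Fin p) (Fin q) ℂ) (B : Matrix (Fin q) (Fin p) ℂ) :
    (Matrix.trace (A * B)).re ≤
      Real.sqrt ((Matrix.trace (Aᴴ * A)).re) * Real.sqrt ((Matrix.trace (Bᴴ * B)).re) := by
  have h1 : (Matrix.trace (A * B)).re ≤ ∑ x : Fin p × Fin q, ‖A x.1 x.2‖ * ‖B x.2 x.1‖ := by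
    calc (Matrix.trace (A * B)).re = ∑ i, ∑ j, (A i j * B j i).re := by
          simp only [Matrix.trace, Matrix.diag, Matrix.mul_apply, Complex.re_sum]
      _ ≤ ∑ i, ∑ j, ‖A i j‖ * ‖B j i‖ := by
          refine Finset.sum_le_sum fun i _ => Finset.sum_le_sum fun j _ => ?_
          calc (A i j * B j i).re ≤ ‖A i j * B j i‖ := Complex.re_le_norm _
            _ = ‖A i j‖ * ‖B j i‖ := norm_mul _ _
      _ = ∑ x : Fin p × Fin q, ‖A x.1 x.2‖ * ‖B x.2 x.1‖ :=
          (Fintype.sum_prod_type (f := fun x : Fin p × Fin q => ‖A x.1 x.2‖ * ‖B x.2 x.1‖)).symm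
  have h2 : (∑ x : Fin p × Fin q, ‖A x.1 x.2‖ * ‖B x.2 x.1‖) ≤
      Real.sqrt (∑ x : Fin p × Fin q, ‖A x.1 x.2‖ ^ 2) *
      Real.sqrt (∑ x : Fin p × Fin q, ‖B x.2 x.1‖ ^ 2) := by
    have hcs := Finset.sum_mul_sq_le_sq_mul_sq Finset.univ
      (fun x : Fin p × Fin q => ‖A x.1 x.2‖) (fun x => ‖B x.2 x.1‖)
    have hnn : (0:ℝ) ≤ ∑ x : Fin p × Fin q, ‖A x.1 x.2‖ * ‖B x.2 x.1‖ :=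
      Finset.sum_nonneg fun x _ => mul_nonneg (norm_nonneg _) (norm_nonneg _)
    calc (∑ x : Fin p × Fin q, ‖A x.1 x.2‖ * ‖B x.2 x.1‖)
        = Real.sqrt ((∑ x : Fin p × Fin q, ‖A x.1 x.2‖ * ‖B x.2 x.1‖) ^ 2) :=
          (Real.sqrt_sq hnn).symm
      _ ≤ Real.sqrt ((∑ x : Fin p × Fin q, ‖A x.1 x.2‖ ^ 2) *
            ∑ x : Fin p × Fin q, ‖B x.2 x.1‖ ^ 2) := Real.sqrt_le_sqrt hcs
      _ = _ := Real.sqrt_mul (Finset.sum_nonneg fun x _ => sq_nonneg _) _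
  refine h1.trans (h2.trans_eq ?_)
  congr 1
  · rw [normSum]
    exact congrArg Real.sqrt
      (Fintype.sum_prod_type (f := fun x : Fin p × Fin q => ‖A x.1 x.2‖ ^ 2))
  · rw [normSum]
    refine congrArg Real.sqrt ?_
    rw [Fintype.sum_prod_type (f := fun x : Fin p × Fin q => ‖B x.2 x.1‖ ^ 2)]
    exact Finset.sum_comm

lemma expandSum {p q : ℕ} (X F : Matrix (Fin p) (Fin q) ℂ) :
    ∑ i, ∑ j, ‖X i j - F i j‖ ^ 2 =
      (Matrix.trace (Xᴴ * X)).re + (Matrix.trace (Fᴴ * F)).re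
        - 2 * (Matrix.trace (Xᴴ * F)).re := by
  have h0 : ∑ i, ∑ j, ‖X i j - F i j‖ ^ 2 = (Matrix.trace ((X - F)ᴴ * (X - F))).re := by
    rw [normSum]
    simp [Matrix.sub_apply]
  rw [h0]
  have h1 : (X - F)ᴴ * (X - F) = Xᴴ * X - Xᴴ * F - (Fᴴ * X - Fᴴ * F) := by
    rw [Matrix.conjTranspose_sub, Matrix.sub_mul, Matrix.mul_sub, Matrix.mul_sub]
  rw [h1]
  have h2 : (Matrix.trace (Fᴴ * X)).re = (Matrix.trace (Xᴴ * F)).re := by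
    have : Fᴴ * X = (Xᴴ * F)ᴴ := by simp [Matrix.conjTranspose_mul]
    rw [this, Matrix.trace_conjTranspose]
    exact Complex.conj_re _
  simp only [Matrix.trace_sub, Complex.sub_re]
  rw [h2]; ring

lemma keyIdentity {m n : ℕ} (F : Matrix (Fin m) (Fin n) ℂ)
    (R : Matrix (Fin n) (Fin n) ℂ)
    (hrank : R.rank = m) (hPD : (F * R * Fᴴ).PosDef) :
    R * Fᴴ * (F * R * Fᴴ)⁻¹ * (F * R) = R := by
  set G := F * R * Fᴴ with hG
  have hGdet : IsUnit G.det := hPD.det_pos.ne'.isUnit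
  have hGinv : G⁻¹ * G = 1 := Matrix.nonsing_inv_mul _ hGdet
  set L := R * Fᴴ * G⁻¹ * (F * R) with hL
  have hLF : L * Fᴴ = R * Fᴴ := by
    calc L * Fᴴ = R * Fᴴ * (G⁻¹ * G) := by
          rw [hL, hG]; simp only [Matrix.mul_assoc]
      _ = R * Fᴴ := by rw [hGinv, Matrix.mul_one]
  have hdisj : LinearMap.range (Fᴴ.mulVecLin) ⊓ LinearMap.ker (R.mulVecLin) = ⊥ := by
    rw [Submodule.eq_bot_iff]
    rintro x ⟨hxU, hxW⟩
    obtain ⟨y, hy⟩ := hxU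
    have hRx : R.mulVec x = 0 := hxW
    by_cases hy0 : y = 0
    · rw [← hy, hy0]; simp [Matrix.mulVecLin_apply]
    · exfalso
      have hpos := hPD.dotProduct_mulVec_pos hy0
      have hzero : G.mulVec y = 0 := by
        rw [hG, ← Matrix.mulVec_mulVec, ← Matrix.mulVec_mulVec]
        have : Fᴴ.mulVec y = x := hy
        rw [this, hRx, Matrix.mulVec_zero]
      rw [hzero] at hpos
      simp at hpos
  have hFrank : (Fᴴ).rank = m := by
    rw [Matrix.rank_conjTranspose]
    refine le_antisymm (by simpa using F.rank_le_card_height) ?_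
    have h1 : G.rank = m := by
      rw [Matrix.rank_of_isUnit G (Matrix.isUnit_iff_isUnit_det G |>.mpr hGdet)]
      simp
    calc m = G.rank := h1.symm
      _ ≤ F.rank := by
          rw [hG, Matrix.mul_assoc]
          exact Matrix.rank_mul_le_left F (R * Fᴴ)
  have hUrank : Module.finrank ℂ (LinearMap.range (Fᴴ.mulVecLin)) = m := hFrank
  have hWrank : Module.finrank ℂ (LinearMap.ker (R.mulVecLin)) = n - m ∧ m ≤ n := by
    have h1 := LinearMap.finrank_range_add_finrank_ker (R.mulVecLin)
    have h2 : Module.finrank ℂ (LinearMap.range R.mulVecLin) = m := hrank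
    rw [h2, Module.finrank_fin_fun] at h1
    omega
  have hsup : LinearMap.range (Fᴴ.mulVecLin) ⊔ LinearMap.ker (R.mulVecLin) = ⊤ := by
    apply Submodule.eq_top_of_finrank_eq
    have h3 := Submodule.finrank_sup_add_finrank_inf_eq
      (LinearMap.range (Fᴴ.mulVecLin)) (LinearMap.ker (R.mulVecLin))
    rw [hdisj] at h3
    simp only [finrank_bot, add_zero] at h3
    rw [h3, hUrank, hWrank.1, Module.finrank_fin_fun]
    omega
  have hvec : ∀ x : Fin n → ℂ, L.mulVec x = R.mulVec x := by
    intro x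
    have hx : x ∈ LinearMap.range (Fᴴ.mulVecLin) ⊔ LinearMap.ker (R.mulVecLin) := by
      rw [hsup]; trivial
    obtain ⟨u, hu, w, hw, huw⟩ := Submodule.mem_sup.mp hx
    obtain ⟨y, hy⟩ := hu
    have hRw : R.mulVec w = 0 := hw
    have hLu : L.mulVec u = R.mulVec u := by
      rw [← hy]
      show L.mulVec (Fᴴ.mulVec y) = R.mulVec (Fᴴ.mulVec y)
      rw [Matrix.mulVec_mulVec, Matrix.mulVec_mulVec, hLF]
    have hLw : L.mulVec w = 0 := by
      have hL2 : L = R * Fᴴ * G⁻¹ * F * R := by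
        rw [hL]; simp only [Matrix.mul_assoc]
      rw [hL2, ← Matrix.mulVec_mulVec, hRw, Matrix.mulVec_zero]
    rw [← huw, Matrix.mulVec_add, Matrix.mulVec_add, hLu, hLw, hRw]
  ext i j
  have := congrFun (hvec (Pi.single j 1)) i
  simpa [Matrix.mulVec_single] using this


/-- Scaled-constrained least-squares matrix with prescribed Gram matrix.
Let `F` be `m×n`, `R` an `n×n` Hermitian positive semidefinite matrix of rank `m` with
`F·R·F*` positive definite, and `β₀ > 0`. With `T = (F·R·F*)^{-1/2}` the unique Hermitian
positive definite matrix whose square is `(F·R·F*)⁻¹`, the matrix `Φ̂ = β₀·T·F·R`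
satisfies `Φ̂*·Φ̂ = β₀²·R` and minimizes the (squared) Frobenius-norm error
`‖Φ − F‖_F²` among all `Φ` with `Φ*·Φ = β₀²·R`. -/
theorem stmt_17 {m n : ℕ} (hm : 0 < m)
    (F : Matrix (Fin m) (Fin n) ℂ)
    (R : Matrix (Fin n) (Fin n) ℂ)
    (hR : R.PosSemidef)
    (hrank : R.rank = m)
    (hPD : (F * R * Fᴴ).PosDef)
    (β₀ : ℝ) (hβ₀ : 0 < β₀)
    (T : Matrix (Fin m) (Fin m) ℂ)
    (hT : T.PosDef)
    (hTsq : T * T = (F * R * Fᴴ)⁻¹)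
    (Φhat : Matrix (Fin m) (Fin n) ℂ)
    (hΦhat : Φhat = (β₀ : ℂ) • (T * F * R)) :
    Φhatᴴ * Φhat = ((β₀ : ℂ) ^ 2) • R ∧
    ∀ Φ : Matrix (Fin m) (Fin n) ℂ, Φᴴ * Φ = ((β₀ : ℂ) ^ 2) • R →
      ∑ i, ∑ j, ‖Φhat i j - F i j‖ ^ 2 ≤ ∑ i, ∑ j, ‖Φ i j - F i j‖ ^ 2 := by
  have hTH : Tᴴ = T := hT.1
  have hRH : Rᴴ = R := hR.1
  have hGdet : IsUnit (F * R * Fᴴ).det := hPD.det_pos.ne'.isUnit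
  have hΦhatH : Φhatᴴ = (β₀ : ℂ) • (R * Fᴴ * T) := by
    rw [hΦhat, Matrix.conjTranspose_smul]
    congr 1
    · exact Complex.conj_ofReal β₀
    · simp only [Matrix.conjTranspose_mul, hTH, hRH, Matrix.mul_assoc]
  have part1 : Φhatᴴ * Φhat = ((β₀ : ℂ) ^ 2) • R := by
    rw [hΦhatH, hΦhat, Matrix.smul_mul, Matrix.mul_smul, smul_smul, ← sq]
    congr 1
    calc R * Fᴴ * T * (T * F * R)
        = R * Fᴴ * (F * R * Fᴴ)⁻¹ * (F * R) := by
          rw [← hTsq]; simp only [Matrix.mul_assoc]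
      _ = R := keyIdentity F R hrank hPD
  refine ⟨part1, fun Φ hΦ => ?_⟩
  -- inverse facts
  have hTinvG : T⁻¹ = T * (F * R * Fᴴ) := by
    apply Matrix.inv_eq_right_inv
    rw [← Matrix.mul_assoc, hTsq, Matrix.nonsing_inv_mul _ hGdet]
  have hTdet : IsUnit T.det := hT.det_pos.ne'.isUnit
  have hM : (T⁻¹).PosDef := hT.inv
  obtain ⟨W, hWW, hWH⟩ : ∃ W : Matrix (Fin m) (Fin m) ℂ, W * W = T⁻¹ ∧ Wᴴ = W := by
    open scoped MatrixOrder in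
    exact ⟨CFC.sqrt T⁻¹, CFC.sqrt_mul_sqrt_self _ hM.posSemidef.nonneg,
      (CFC.sqrt_nonneg _).posSemidef.1⟩
  have hWdetne : W.det ≠ 0 := by
    intro h0
    have h1 := congrArg Matrix.det hWW
    rw [Matrix.det_mul, h0, mul_zero] at h1
    exact hM.det_pos.ne' h1.symm
  have hWinv1 : W * W⁻¹ = 1 := Matrix.mul_nonsing_inv _ hWdetne.isUnit
  have hWinvH : (W⁻¹)ᴴ = W⁻¹ := by rw [Matrix.conjTranspose_nonsing_inv, hWH]
  have hWiWi : W⁻¹ * W⁻¹ = T := by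
    have h1 := Matrix.mul_inv_rev W W
    rw [hWW] at h1
    rw [← h1]
    exact Matrix.nonsing_inv_nonsing_inv T hTdet
  -- trace of T⁻¹ is nonneg real part
  have htrnn : 0 ≤ (Matrix.trace T⁻¹).re := by
    have : T⁻¹ = Wᴴ * W := by rw [hWH, hWW]
    rw [this, normSum]
    exact Finset.sum_nonneg fun i _ => Finset.sum_nonneg fun j _ => sq_nonneg _
  -- value of RHS inner product
  have htrX : Matrix.trace (R * Fᴴ * T * F) = Matrix.trace T⁻¹ := by
    rw [Matrix.trace_mul_comm]
    rw [show F * (R * Fᴴ * T) = F * R * Fᴴ * T from by simp only [Matrix.mul_assoc]]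
    rw [Matrix.trace_mul_comm, ← hTinvG]
  have hrhs : (Matrix.trace (Φhatᴴ * F)).re = β₀ * (Matrix.trace T⁻¹).re := by
    rw [hΦhatH, Matrix.smul_mul, Matrix.trace_smul, htrX, smul_eq_mul,
      Complex.re_ofReal_mul]
  -- key inequality via Cauchy-Schwarz
  have hkey : (Matrix.trace (Φᴴ * F)).re ≤ β₀ * (Matrix.trace T⁻¹).re := by
    have e1 : Matrix.trace (Φᴴ * F) = Matrix.trace (W * (W⁻¹ * F * Φᴴ)) := by
      rw [Matrix.trace_mul_comm]
      congr 1
      rw [show W * (W⁻¹ * F * Φᴴ) = (W * W⁻¹) * (F * Φᴴ) from by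
        simp only [Matrix.mul_assoc], hWinv1, Matrix.one_mul]
    have hWtr : (Matrix.trace (Wᴴ * W)).re = (Matrix.trace T⁻¹).re := by
      rw [hWH, hWW]
    have hBtr : (Matrix.trace ((W⁻¹ * F * Φᴴ)ᴴ * (W⁻¹ * F * Φᴴ))).re
        = β₀ ^ 2 * (Matrix.trace T⁻¹).re := by
      have hBH : (W⁻¹ * F * Φᴴ)ᴴ = Φ * (Fᴴ * W⁻¹) := by
        simp only [Matrix.conjTranspose_mul, hWinvH, Matrix.conjTranspose_conjTranspose,
          Matrix.mul_assoc]
      rw [hBH]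
      rw [show Φ * (Fᴴ * W⁻¹) * (W⁻¹ * F * Φᴴ) = Φ * (Fᴴ * W⁻¹ * (W⁻¹ * F * Φᴴ)) from by
        simp only [Matrix.mul_assoc]]
      rw [Matrix.trace_mul_comm]
      rw [show Fᴴ * W⁻¹ * (W⁻¹ * F * Φᴴ) * Φ
          = Fᴴ * (W⁻¹ * W⁻¹) * F * (Φᴴ * Φ) from by simp only [Matrix.mul_assoc]]
      rw [hWiWi, hΦ, Matrix.mul_smul, Matrix.trace_smul, smul_eq_mul]
      have h2 : Matrix.trace (Fᴴ * T * F * R) = Matrix.trace T⁻¹ := by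
        rw [show Fᴴ * T * F * R = Fᴴ * (T * F * R) from by simp only [Matrix.mul_assoc]]
        rw [Matrix.trace_mul_comm]
        rw [show T * F * R * Fᴴ = T * (F * R * Fᴴ) from by simp only [Matrix.mul_assoc]]
        rw [← hTinvG]
      rw [h2]
      have : ((β₀ : ℂ) ^ 2) = (((β₀ ^ 2 : ℝ)) : ℂ) := by push_cast; ring
      rw [this, Complex.re_ofReal_mul]
    have hcs := trace_cs W (W⁻¹ * F * Φᴴ)
    rw [e1]
    refine hcs.trans ?_
    rw [hWtr, hBtr]
    rw [show β₀ ^ 2 * (Matrix.trace T⁻¹).re = (β₀ * Real.sqrt ((Matrix.trace T⁻¹).re)) ^ 2 from by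
      rw [mul_pow, Real.sq_sqrt htrnn]]
    rw [Real.sqrt_sq (by positivity)]
    rw [show Real.sqrt ((Matrix.trace T⁻¹).re) * (β₀ * Real.sqrt ((Matrix.trace T⁻¹).re))
        = β₀ * (Real.sqrt ((Matrix.trace T⁻¹).re) * Real.sqrt ((Matrix.trace T⁻¹).re)) from by
      ring]
    rw [Real.mul_self_sqrt htrnn]
  -- assemble
  rw [expandSum Φhat F, expandSum Φ F]
  have htrgram : (Matrix.trace (Φhatᴴ * Φhat)).re = (Matrix.trace (Φᴴ * Φ)).re := by
    rw [part1, hΦ]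
  rw [htrgram, hrhs] at *
  linarith [hkey, hrhs]
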